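/- arXiv:1301.5169 — 3 statements merged into one kernel-verified Lean document; each statement's English description precedes it below -/
import Mathlib

section
/- Let μ := −‖V‖_∞ − 1 and φ_μ(λ) := (λ − μ)^{-1}. Then there is a constant C = C(b,d) depending only on b and d such that for every λ ∈ ℂ \ {μ}, dist(φ_μ(λ), φ_μ(E)) ≥ C · dist(λ, E) / ((1 + ‖V‖_∞)² (1 + |λ|)²). -/
open MeasureTheory Metric Set
open scoped ENNReal Topology

noncomputable section

/-- The set `E = {Λ_j}_{j∈ℕ}` of Landau levels `Λ_j = b(d+2j)`, as a subset of `ℂ`. -/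
def landauLevels (b : ℝ) (d : ℕ) : Set ℂ :=
  {z : ℂ | ∃ j : ℕ, z = ((b * (d + 2 * j) : ℝ) : ℂ)}

/-- The half line `I = [Λ₀, +∞)`, `Λ₀ = bd`, as a subset of `ℂ`. -/
def halfLine (b : ℝ) (d : ℕ) : Set ℂ :=
  {z : ℂ | z.im = 0 ∧ (b * d : ℝ) ≤ z.re}

/-- `‖V‖_{L^∞}` (essential supremum norm). -/
def supNorm {α : Type*} {β : Type*} [MeasureSpace α] [NormedAddCommGroup β] (V : α → β) : ℝ :=
  (eLpNorm V ⊤ volume).toReal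

lemma aux_distortion (K L s M A T D : ℝ) (hK : 0 < K) (hKL : K ≤ L) (hs : 0 ≤ s)
    (hM : 0 ≤ M) (hA0 : 0 < A) (hA : A ≤ M + s + 1)
    (hT0 : 0 ≤ T) (hTL : L - M ≤ T)
    (hD0 : 0 ≤ D) (hDT : D ≤ T) (hDM : D ≤ M + K) :
    min (1/3) (K / (2 * (1+K)^2)) * D / ((1+s)^2 * (1+M)^2) ≤ T / (A * (L + s + 1)) := by
  have hL0 : 0 < L := lt_of_lt_of_le hK hKL
  have hCc1 : min (1/3) (K / (2 * (1+K)^2)) ≤ 1/3 := min_le_left _ _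
  have hCc2 : min (1/3) (K / (2 * (1+K)^2)) ≤ K / (2 * (1+K)^2) := min_le_right _ _
  have hCc0 : (0:ℝ) ≤ min (1/3) (K / (2 * (1+K)^2)) := by positivity
  rw [div_le_div_iff₀ (by positivity) (by positivity)]
  rcases le_or_gt L (2*(1+M)) with hcase | hcase
  · calc min (1/3) (K / (2 * (1+K)^2)) * D * (A * (L + s + 1))
        ≤ (1/3) * T * (((1+s)*(1+M)) * ((1+s)*(3*(1+M)))) := by
          gcongr
          · nlinarith [mul_nonneg hs hM]
          · nlinarith [mul_nonneg hs hM]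
      _ = T * ((1+s)^2 * (1+M)^2) := by ring
  · have hL2T : L ≤ 2*T := by linarith
    set X : ℝ := (K+1)/K * (2*T) with hX
    have hX0 : 0 ≤ X := by positivity
    have h1 : (1+L)*K ≤ (K+1)*(2*T) := by
      nlinarith [mul_nonneg (sub_nonneg.2 hL2T) hK.le]
    have h2 : 1+L ≤ X := by
      rw [hX, div_mul_eq_mul_div, le_div_iff₀ hK]; linarith
    calc min (1/3) (K / (2 * (1+K)^2)) * D * (A * (L + s + 1))
        ≤ (K / (2 * (1+K)^2)) * ((1+K)*(1+M)) * (((1+s)*(1+M)) * ((1+s)*X)) := by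
          gcongr
          · nlinarith [mul_nonneg hK.le hM]
          · nlinarith [mul_nonneg hs hM]
          · nlinarith [h2, mul_le_mul_of_nonneg_left h2 hs, mul_nonneg hs hL0.le]
      _ = T * ((1+s)^2 * (1+M)^2) := by rw [hX]; field_simp; ring

/-- **Lemma 6.2** (distortion lemma for `φ_μ(λ) = (λ - μ)⁻¹`, `μ = -‖V‖_∞ - 1`).  There is a
constant `C = C(b,d)` such that for every `λ ∈ ℂ \ {μ}`,
`dist(φ_μ(λ), φ_μ(E)) ≥ C dist(λ, E) / ((1+‖V‖_∞)² (1+|λ|)²)`. -/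
theorem distortion_landau_levels
    (b : ℝ) (hb : 0 < b) (d : ℕ) (hd : 1 ≤ d) :
    ∃ Cc : ℝ, 0 < Cc ∧
      ∀ (V : EuclideanSpace ℝ (Fin (2 * d)) → ℂ), MemLp V ⊤ volume →
      ∀ lam : ℂ, lam ≠ ((-(supNorm V) - 1 : ℝ) : ℂ) →
        Cc * infDist lam (landauLevels b d) /
            ((1 + supNorm V) ^ 2 * (1 + ‖lam‖) ^ 2) ≤
          infDist ((lam - ((-(supNorm V) - 1 : ℝ) : ℂ))⁻¹)
            ((fun w : ℂ => (w - ((-(supNorm V) - 1 : ℝ) : ℂ))⁻¹) '' landauLevels b d) := by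

  have hd1 : (1:ℝ) ≤ (d:ℝ) := by exact_mod_cast hd
  have hK : 0 < b * d := by nlinarith
  refine ⟨min (1/3) ((b * d) / (2 * (1 + b * d)^2)), by positivity, ?_⟩
  intro V _ lam hlam
  set s : ℝ := supNorm V with hsdef
  have hs0 : 0 ≤ s := ENNReal.toReal_nonneg
  set μ : ℝ := -s - 1 with hμdef
  have hEne : (landauLevels b d).Nonempty := ⟨_, ⟨0, rfl⟩⟩
  by_contra hcon
  push_neg at hcon
  rw [Metric.infDist_lt_iff (hEne.image _)] at hcon
  obtain ⟨y, ⟨z, ⟨j, rfl⟩, rfl⟩, hy⟩ := hcon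
  refine absurd hy (not_lt.mpr ?_)
  set L : ℝ := b * (d + 2 * j) with hLdef
  have hKL : b * d ≤ L := by
    rw [hLdef]
    nlinarith [mul_nonneg hb.le (by positivity : (0:ℝ) ≤ 2*(j:ℝ))]
  have hL0 : 0 < L := lt_of_lt_of_le hK hKL
  have ha : (lam - (μ:ℂ)) ≠ 0 := sub_ne_zero.mpr hlam
  have hb' : ((L:ℂ) - (μ:ℂ)) ≠ 0 := by
    rw [sub_ne_zero]
    intro h
    have := congrArg Complex.re h
    simp at this
    nlinarith [this]
  have hBabs : ‖((L:ℂ) - (μ:ℂ))‖ = L + s + 1 := by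
    rw [← Complex.ofReal_sub, Complex.norm_real, Real.norm_eq_abs, abs_of_pos (by nlinarith)]
    rw [hμdef]; ring_nf
  have hdist : dist ((lam - (μ:ℂ))⁻¹) (((L:ℂ) - (μ:ℂ))⁻¹)
      = ‖((L:ℂ) - lam)‖ / (‖(lam - (μ:ℂ))‖ * (L + s + 1)) := by
    rw [Complex.dist_eq, inv_sub_inv ha hb', norm_div, norm_mul, hBabs]
    congr 1
    congr 1
    ring
  rw [hdist]
  set M : ℝ := ‖lam‖ with hMdef
  set A : ℝ := ‖(lam - (μ:ℂ))‖ with hAdef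
  set T : ℝ := ‖((L:ℂ) - lam)‖ with hTdef
  set D : ℝ := infDist lam (landauLevels b d) with hDdef
  have hμabs : ‖((μ:ℂ))‖ = s + 1 := by
    rw [Complex.norm_real, Real.norm_eq_abs, hμdef, abs_of_neg (by linarith)]; ring
  apply aux_distortion (b * d) L s M A T D hK hKL hs0 (norm_nonneg _)
  · exact norm_pos_iff.mpr ha
  · have h := norm_sub_le lam ((μ:ℂ))
    rw [hμabs] at h
    rw [hAdef, hMdef]; linarith
  · exact norm_nonneg _
  · calc L - M = ‖((L:ℂ))‖ - ‖lam‖ := by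
          rw [Complex.norm_real, Real.norm_eq_abs, abs_of_pos hL0]
      _ ≤ T := by
          rw [hTdef]
          exact norm_sub_norm_le _ _
  · exact infDist_nonneg
  · calc D ≤ dist lam ((L:ℂ)) := infDist_le_dist_of_mem ⟨j, rfl⟩
      _ = T := by rw [Complex.dist_eq, hTdef, norm_sub_rev]
  · calc D ≤ dist lam (((b * (d + 2 * (0:ℕ)) : ℝ) : ℂ)) := infDist_le_dist_of_mem ⟨0, rfl⟩
      _ ≤ M + b * d := by
          rw [Complex.dist_eq]
          have h := norm_sub_le lam (((b * (d + 2 * (0:ℕ)) : ℝ) : ℂ))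
          have h2 : ‖(((b * (d + 2 * (0:ℕ)) : ℝ) : ℂ))‖ = b * d := by
            rw [Complex.norm_real, Real.norm_eq_abs, abs_of_pos (by push_cast; nlinarith)]
            push_cast; ring
          rw [h2] at h
          rw [hMdef]; linarith


end
end

section
/- Let μ := −‖V‖_∞ − 1, φ_μ(λ) := (λ − μ)^{-1}, and I := [Λ_0, +∞). Then there is a constant C = C(b,d) such that for every λ ∈ ℂ \ {μ}, dist(φ_μ(λ), φ_μ(I)) ≥ C · dist(λ, I) / ((1 + ‖V‖_∞)² (1 + |λ|)²). -/
open MeasureTheory Metric Set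
open scoped ENNReal Topology

noncomputable section

set_option maxHeartbeats 1600000 in
/-- **Lemma 6.3** (distortion lemma for `φ_μ(λ) = (λ - μ)⁻¹`, `μ = -‖V‖_∞ - 1`, and the
half-line `I = [Λ₀, +∞)`).  There is a constant `C = C(b,d)` such that for every
`λ ∈ ℂ \ {μ}`, `dist(φ_μ(λ), φ_μ(I)) ≥ C dist(λ, I) / ((1+‖V‖_∞)² (1+|λ|)²)`. -/
theorem distortion_half_line
    (b : ℝ) (hb : 0 < b) (d : ℕ) (hd : 1 ≤ d) :
    ∃ Cc : ℝ, 0 < Cc ∧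
      ∀ (V : EuclideanSpace ℝ (Fin (2 * d)) → ℂ), MemLp V ⊤ volume →
      ∀ lam : ℂ, lam ≠ ((-(supNorm V) - 1 : ℝ) : ℂ) →
        Cc * infDist lam (halfLine b d) /
            ((1 + supNorm V) ^ 2 * (1 + ‖lam‖) ^ 2) ≤
          infDist ((lam - ((-(supNorm V) - 1 : ℝ) : ℂ))⁻¹)
            ((fun w : ℂ => (w - ((-(supNorm V) - 1 : ℝ) : ℂ))⁻¹) '' halfLine b d) := by
  have hd' : (1 : ℝ) ≤ d := by exact_mod_cast hd
  have hbd : (0 : ℝ) < b * d := mul_pos hb (by linarith)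
  refine ⟨1 / (3 * (1 + b * d)), by positivity, ?_⟩
  intro V hV lam hlam
  set s := supNorm V with hsdef
  have hs : 0 ≤ s := ENNReal.toReal_nonneg
  set μ : ℂ := ((-s - 1 : ℝ) : ℂ) with hμ
  set A := ‖lam‖ with hA
  have hA0 : 0 ≤ A := norm_nonneg lam
  set D := infDist lam (halfLine b d) with hD
  have hD0 : 0 ≤ D := infDist_nonneg
  clear_value s A D
  have hbdmem : ((b * d : ℝ) : ℂ) ∈ halfLine b d := by
    constructor <;> simp
  have hne : (halfLine b d).Nonempty := ⟨_, hbdmem⟩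
  -- D ≤ A + b*d
  have hD2 : D ≤ A + b * d := by
    have h1 : D ≤ dist lam ((b * d : ℝ) : ℂ) := by rw [hD]; exact infDist_le_dist_of_mem hbdmem
    have h2 : dist lam ((b * d : ℝ) : ℂ) ≤ A + b * d := by
      rw [Complex.dist_eq]
      calc ‖lam - ((b * d : ℝ) : ℂ)‖
          ≤ ‖lam‖ + ‖((b * d : ℝ) : ℂ)‖ :=
            norm_sub_le lam _
        _ = A + b * d := by rw [Complex.norm_real, Real.norm_eq_abs, abs_of_pos hbd, ← hA]
    linarith
  -- |lam - μ| bounds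
  have hlμ0 : lam - μ ≠ 0 := sub_ne_zero.mpr hlam
  have hlμpos : 0 < ‖lam - μ‖ := by
    simpa using norm_pos_iff.mpr hlμ0
  have hlμle : ‖lam - μ‖ ≤ (1 + s) * (1 + A) := by
    have h1 : ‖lam - μ‖ ≤ A + ‖μ‖ := by
      rw [hA]; exact norm_sub_le lam μ
    have h2 : ‖μ‖ = s + 1 := by
      rw [hμ, Complex.norm_real, Real.norm_eq_abs, abs_of_nonpos (by linarith)]
      ring
    nlinarith
  have main : ∀ w ∈ halfLine b d,
      1 / (3 * (1 + b * ↑d)) * D / ((1 + s) ^ 2 * (1 + A) ^ 2)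
        ≤ dist ((lam - μ)⁻¹) ((w - μ)⁻¹) := by
    intro w hw
    obtain ⟨him, hre⟩ := hw
    set r := w.re with hr
    have hrpos : 0 < r := lt_of_lt_of_le hbd hre
    have hweq : w = ((r : ℝ) : ℂ) := Complex.ext (by simp [hr]) (by simp [him])
    have hwμ : w - μ = ((r + s + 1 : ℝ) : ℂ) := by
      rw [hweq, hμ]; push_cast; ring
    have hwμabs : ‖w - μ‖ = r + s + 1 := by
      rw [hwμ, Complex.norm_real, Real.norm_eq_abs, abs_of_pos (by linarith)]
    have hwμ0 : w - μ ≠ 0 := by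
      rw [hwμ]
      exact_mod_cast (by positivity : (r + s + 1 : ℝ) ≠ 0)
    -- dist formula
    have hdist : dist ((lam - μ)⁻¹) ((w - μ)⁻¹)
        = ‖lam - w‖ / (‖lam - μ‖ * (r + s + 1)) := by
      rw [Complex.dist_eq]
      have : (lam - μ)⁻¹ - (w - μ)⁻¹ = (w - lam) / ((lam - μ) * (w - μ)) := by
        field_simp
        ring
      rw [this, norm_div, norm_mul, hwμabs]
      rw [show ‖w - lam‖ = ‖lam - w‖ by
        rw [← neg_sub lam w, norm_neg]]
    rw [hdist]
    -- N := |lam - w| ≥ D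
    have hN1 : D ≤ ‖lam - w‖ := by
      have h := infDist_le_dist_of_mem (s := halfLine b d) (x := lam) ⟨him, hre⟩
      rw [Complex.dist_eq] at h
      rw [hD]; exact h
    set N := ‖lam - w‖ with hNdef
    clear_value N
    have hN0 : 0 ≤ N := hNdef ▸ norm_nonneg _
    have hP : (0 : ℝ) < (1 + s) ^ 2 * (1 + A) ^ 2 := by positivity
    have hQ : (0 : ℝ) < ‖lam - μ‖ * (r + s + 1) := by
      have : (0:ℝ) < r + s + 1 := by linarith
      positivity
    rw [div_le_div_iff₀ hP hQ]
    by_cases hcase : r ≤ 2 * A + s + 2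
    · -- small r : Q ≤ 3 P, N ≥ D
      have hQle : ‖lam - μ‖ * (r + s + 1) ≤ 3 * ((1 + s) ^ 2 * (1 + A) ^ 2) := by
        have h1 : r + s + 1 ≤ 3 * ((1 + s) * (1 + A)) := by nlinarith
        have h2 : (0:ℝ) < r + s + 1 := by linarith
        nlinarith
      have hCc : 1 / (3 * (1 + b * ↑d)) * 3 ≤ 1 := by
        rw [div_mul_eq_mul_div, div_le_one (by positivity)]
        nlinarith
      calc 1 / (3 * (1 + b * ↑d)) * D * (‖lam - μ‖ * (r + s + 1))
          ≤ 1 / (3 * (1 + b * ↑d)) * D * (3 * ((1 + s) ^ 2 * (1 + A) ^ 2)) :=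
            mul_le_mul_of_nonneg_left hQle (by positivity)
        _ = (1 / (3 * (1 + b * ↑d)) * 3) * (D * ((1 + s) ^ 2 * (1 + A) ^ 2)) := by ring
        _ ≤ 1 * (D * ((1 + s) ^ 2 * (1 + A) ^ 2)) :=
            mul_le_mul_of_nonneg_right hCc (by positivity)
        _ = D * ((1 + s) ^ 2 * (1 + A) ^ 2) := one_mul _
        _ ≤ N * ((1 + s) ^ 2 * (1 + A) ^ 2) := mul_le_mul_of_nonneg_right hN1 hP.le
    · -- large r : N ≥ (r + s + 1)/2
      push_neg at hcase
      have habsw : ‖w‖ = r := by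
        rw [hweq, Complex.norm_real, Real.norm_eq_abs, abs_of_pos hrpos]
      have hNge : (r + s + 1) / 2 ≤ N := by
        have htri : ‖w‖ ≤ N + A := by
          have h := norm_sub_le (lam - w) lam
          rw [show lam - w - lam = -w by ring, norm_neg] at h
          rw [hNdef, hA]; exact h
        rw [habsw] at htri
        linarith
      -- D ≤ (1 + b*d)(1+s)(1+A)
      have hD3 : D ≤ (1 + b * d) * ((1 + s) * (1 + A)) := by
        nlinarith [mul_nonneg hbd.le hA0, mul_nonneg hs hA0,
          mul_nonneg (mul_nonneg hbd.le hs) hA0, mul_nonneg hbd.le hs]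
      -- goal : Cc * D * (|lam-μ| (r+s+1)) ≤ N * P
      have key : ‖lam - μ‖ * (r + s + 1) ≤ (1 + s) * (1 + A) * (2 * N) := by
        have h2N : r + s + 1 ≤ 2 * N := by linarith
        exact mul_le_mul hlμle h2N (by linarith) (by positivity)
      have hCpos : (0:ℝ) < 1 / (3 * (1 + b * d)) := by positivity
      calc 1 / (3 * (1 + b * d)) * D * (‖lam - μ‖ * (r + s + 1))
          ≤ 1 / (3 * (1 + b * d)) * ((1 + b * d) * ((1 + s) * (1 + A)))
              * ((1 + s) * (1 + A) * (2 * N)) := by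
            apply mul_le_mul
            · exact mul_le_mul_of_nonneg_left hD3 hCpos.le
            · exact key
            · exact hQ.le
            · positivity
        _ = (2 / 3) * (N * ((1 + s) ^ 2 * (1 + A) ^ 2)) := by
            field_simp
        _ ≤ N * ((1 + s) ^ 2 * (1 + A) ^ 2) := by nlinarith [mul_nonneg hN0 hP.le]

  refine le_of_not_gt fun hlt => ?_
  rw [infDist_lt_iff (hne.image _)] at hlt
  obtain ⟨y, ⟨w, hw, rfl⟩, hlt2⟩ := hlt
  exact absurd hlt2 (not_lt.2 (main w hw))

end
end

section
/- Let μ := −‖V‖_∞ − 1, φ_μ(λ) := (λ − μ)^{-1}, I := [Λ_0,+∞), E := {Λ_j}_{j∈ℕ} ⊂ I, r_j := dist(Λ_j, E \ {Λ_j}) = 2b, A := ∪_j B(Λ_j, 2r_j), D := ℂ \ A; analogously, for ω ∈ φ_μ(E) let r_ω := dist(ω, φ_μ(E) \ {ω}), 𝒜 := ∪_ω B(ω, 2r_ω), 𝒟 := ℂ \ 𝒜. Then: (i) for every λ ∈ D one has dist(λ,E)/2 ≤ dist(λ,I) ≤ dist(λ,E), and for every λ with φ_μ(λ) ∈ 𝒟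 one has dist(φ_μ(λ),φ_μ(E))/2 ≤ dist(φ_μ(λ),φ_μ(I)) ≤ dist(φ_μ(λ),φ_μ(E)); (ii) there is a constant C = C(b,d) such that for every λ ∈ A, dist(φ_μ(λ), φ_μ(E)) ≥ C · dist(λ, E) / ((1 + ‖V‖_∞)² (1 + |λ|)²). -/
open MeasureTheory Metric Set
open scoped ENNReal Topology

noncomputable section

/-- The Landau level `Λ_j = b(d+2j)` as a point of `ℂ`. -/
def landauLevel (b : ℝ) (d : ℕ) (j : ℕ) : ℂ := ((b * (d + 2 * j) : ℝ) : ℂ)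

/-- The union `A = ∪_j B(Λ_j, 2r_j)` with `r_j = dist(Λ_j, E \ {Λ_j})`. -/
def unionBalls (b : ℝ) (d : ℕ) : Set ℂ :=
  ⋃ j : ℕ, ball (landauLevel b d j)
    (2 * infDist (landauLevel b d j) (landauLevels b d \ {landauLevel b d j}))

/-- For a set `S ⊆ ℂ`, the union `∪_{ω ∈ S} B(ω, 2 r_ω)` with `r_ω = dist(ω, S \ {ω})`. -/
def unionBallsOf (S : Set ℂ) : Set ℂ :=
  ⋃ ω ∈ S, ball ω (2 * infDist ω (S \ {ω}))


lemma my_le_infDist {x : ℂ} {s : Set ℂ} (hs : s.Nonempty) {r : ℝ}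
    (H : ∀ y ∈ s, r ≤ dist x y) : r ≤ infDist x s := by
  by_contra h
  push_neg at h
  obtain ⟨y, hy, hlt⟩ := (infDist_lt_iff hs).1 h
  exact absurd hlt (not_lt.2 (H y hy))

lemma dist_ofReal' (a b : ℝ) : dist (a:ℂ) (b:ℂ) = |a - b| := by
  rw [Complex.dist_eq]; norm_cast

/-- levels are `2b`-separated -/
lemma lvl_sep {b : ℝ} (hb : 0 < b) (d : ℕ) {j k : ℕ} (h : j ≠ k) :
    2 * b ≤ |b * (d + 2 * j) - b * (d + 2 * k)| := by
  have hz : ((j : ℤ) - k) ≠ 0 := sub_ne_zero.mpr (by exact_mod_cast h)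
  have h1 : (1 : ℤ) ≤ |(j : ℤ) - k| := Int.one_le_abs hz
  have h1' : (1 : ℝ) ≤ |(j : ℝ) - (k : ℝ)| := by exact_mod_cast h1
  have he : |b * (d + 2 * j) - b * (d + 2 * k)| = 2 * b * |(j:ℝ) - k| := by
    rw [show b * (d + 2 * j) - b * (d + 2 * k) = 2 * b * ((j:ℝ) - k) by ring,
      abs_mul, abs_of_pos (by linarith)]
  rw [he]
  nlinarith

/-- the key gap inequality for the transformed levels -/
lemma gap_le_abs {b c : ℝ} (hb : 0 < b) (hc : 1 ≤ c) {d : ℕ} {j k : ℕ} (h : j ≠ k) :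
    (b * (d + 2 * j) + c)⁻¹ - (b * (d + 2 * ((j:ℝ)+1)) + c)⁻¹ ≤
      |(b * (d + 2 * j) + c)⁻¹ - (b * (d + 2 * k) + c)⁻¹| := by
  set A : ℕ → ℝ := fun i => b * (d + 2 * i) + c with hA
  have hApos : ∀ i : ℕ, 0 < A i := by
    intro i
    have : (0:ℝ) ≤ (d:ℝ) + 2*i := by positivity
    simp only [hA]
    nlinarith
  have hrw : b * (d + 2 * ((j:ℝ)+1)) + c = A (j+1) := by simp only [hA]; push_cast; ring
  rw [hrw]
  have h0 : (0:ℝ) < A j := hApos j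
  have h1 : (0:ℝ) < A k := hApos k
  have h2 : (0:ℝ) < A (j+1) := hApos (j+1)
  have hAj1 : A (j+1) = A j + 2*b := by simp only [hA]; push_cast; ring
  rcases h.lt_or_gt with hlt | hlt
  · have hk1 : (j:ℝ) + 1 ≤ k := by exact_mod_cast hlt
    have hAk : A k = A j + 2*b*((k:ℝ) - j) := by simp only [hA]; push_cast; ring
    have hgap : (A j)⁻¹ - (A (j+1))⁻¹ ≤ (A j)⁻¹ - (A k)⁻¹ := by
      rw [show (A j)⁻¹ - (A k)⁻¹ = (A k - A j) / (A j * A k) by field_simp,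
        show (A j)⁻¹ - (A (j+1))⁻¹ = (A (j+1) - A j) / (A j * A (j+1)) by field_simp]
      rw [div_le_div_iff₀ (by positivity) (by positivity)]
      rw [hAk, hAj1]
      nlinarith [mul_nonneg (by positivity : (0:ℝ) ≤ 2*b*A j*A j)
        (by linarith : (0:ℝ) ≤ (k:ℝ) - j - 1)]
    calc (A j)⁻¹ - (A (j+1))⁻¹ ≤ (A j)⁻¹ - (A k)⁻¹ := hgap
      _ ≤ |(A j)⁻¹ - (A k)⁻¹| := le_abs_self _
  · have hk1 : (k:ℝ) + 1 ≤ j := by exact_mod_cast hlt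
    have hAk : A k = A j - 2*b*((j:ℝ) - k) := by simp only [hA]; push_cast; ring
    have hAkj1 : A k ≤ A (j+1) := by rw [hAk, hAj1]; nlinarith
    have key : (A j)⁻¹ - (A (j+1))⁻¹ ≤ (A k)⁻¹ - (A j)⁻¹ := by
      rw [show (A k)⁻¹ - (A j)⁻¹ = (A j - A k) / (A k * A j) by field_simp,
        show (A j)⁻¹ - (A (j+1))⁻¹ = (A (j+1) - A j) / (A j * A (j+1)) by field_simp]
      rw [div_le_div_iff₀ (by positivity) (by positivity)]
      rw [hAk, hAj1]
      nlinarith [mul_nonneg (by positivity : (0:ℝ) ≤ 2*b*A j)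
          (mul_nonneg (by linarith : (0:ℝ) ≤ (j:ℝ)-k-1) h0.le),
        mul_nonneg (by positivity : (0:ℝ) ≤ 2*b*A j)
          (by nlinarith : (0:ℝ) ≤ 4*b*((j:ℝ)-k))]
    calc (A j)⁻¹ - (A (j+1))⁻¹ ≤ (A k)⁻¹ - (A j)⁻¹ := key
      _ ≤ |(A j)⁻¹ - (A k)⁻¹| := by rw [abs_sub_comm]; exact le_abs_self _


lemma exists_bracket {b : ℝ} (hb : 0 < b) (d : ℕ) {x : ℝ} (hx : b * d ≤ x) :
    ∃ j : ℕ, b * (d + 2 * j) ≤ x ∧ x ≤ b * (d + 2 * ((j:ℝ) + 1)) := by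
  set t := (x - b * d) / (2 * b) with ht
  have ht0 : 0 ≤ t := div_nonneg (by linarith) (by linarith)
  have htt : t * (2 * b) = x - b * d := by rw [ht]; field_simp [hb.ne']
  refine ⟨⌊t⌋₊, ?_, ?_⟩
  · have h1 : (⌊t⌋₊ : ℝ) ≤ t := Nat.floor_le ht0
    nlinarith
  · have h2 : t < ⌊t⌋₊ + 1 := Nat.lt_floor_add_one t
    nlinarith


lemma landau_nonempty (b : ℝ) (d : ℕ) : (landauLevels b d).Nonempty := ⟨_, ⟨0, rfl⟩⟩

lemma halfLine_nonempty (b : ℝ) (d : ℕ) : (halfLine b d).Nonempty :=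
  ⟨((b*d : ℝ) : ℂ), by simp [halfLine]⟩

lemma landau_subset_halfLine {b : ℝ} (hb : 0 < b) (d : ℕ) :
    landauLevels b d ⊆ halfLine b d := by
  rintro z ⟨j, rfl⟩
  refine ⟨by simp, ?_⟩
  simp only [Complex.ofReal_re]
  nlinarith [Nat.cast_nonneg (α := ℝ) j]

lemma lvl_mem (b : ℝ) (d : ℕ) (j : ℕ) : landauLevel b d j ∈ landauLevels b d := ⟨j, rfl⟩

/-- radius lower bound `2b ≤ r_j` -/
lemma radius_ge {b : ℝ} (hb : 0 < b) (d : ℕ) (j : ℕ) :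
    2 * b ≤ infDist (landauLevel b d j) (landauLevels b d \ {landauLevel b d j}) := by
  have hne : (landauLevels b d \ {landauLevel b d j}).Nonempty := by
    refine ⟨landauLevel b d (j+1), lvl_mem b d (j+1), ?_⟩
    simp only [mem_singleton_iff, landauLevel, Complex.ofReal_inj]
    push_cast
    intro h
    nlinarith
  refine my_le_infDist hne ?_
  rintro y ⟨⟨k, rfl⟩, hk⟩
  have hkj : k ≠ j := by
    rintro rfl
    exact hk rfl
  rw [show landauLevel b d j = ((b * (d + 2*j) : ℝ) : ℂ) from rfl, dist_ofReal']
  exact lvl_sep hb d hkj.symm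

/-- radius upper bound `r_j ≤ 2b` -/
lemma radius_le {b : ℝ} (hb : 0 < b) (d : ℕ) (j : ℕ) :
    infDist (landauLevel b d j) (landauLevels b d \ {landauLevel b d j}) ≤ 2 * b := by
  have hmem : landauLevel b d (j+1) ∈ landauLevels b d \ {landauLevel b d j} := by
    refine ⟨lvl_mem b d (j+1), ?_⟩
    simp only [mem_singleton_iff, landauLevel, Complex.ofReal_inj]
    push_cast
    intro h
    nlinarith
  refine le_trans (infDist_le_dist_of_mem hmem) ?_
  rw [show landauLevel b d j = ((b * (d + 2*j) : ℝ) : ℂ) from rfl,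
    show landauLevel b d (j+1) = ((b * (d + 2*((j+1:ℕ):ℝ)) : ℝ) : ℂ) from rfl, dist_ofReal']
  rw [show b * ((d:ℝ) + 2*j) - b * (d + 2*((j+1:ℕ):ℝ)) = -(2*b) by push_cast; ring]
  rw [abs_neg, abs_of_pos (by linarith)]

/-- ball exclusion -/
lemma dist_ge_of_not_mem_unionBalls {b : ℝ} {d : ℕ} {lam : ℂ} (hD : lam ∉ unionBalls b d)
    (j : ℕ) :
    2 * infDist (landauLevel b d j) (landauLevels b d \ {landauLevel b d j}) ≤
      dist lam (landauLevel b d j) := by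
  simp only [unionBalls, mem_iUnion, not_exists] at hD
  by_contra h
  push_neg at h
  exact hD j (mem_ball.mpr h)

lemma dist_ge_of_not_mem_unionBallsOf {S : Set ℂ} {z ω : ℂ} (hD : z ∉ unionBallsOf S)
    (hω : ω ∈ S) : 2 * infDist ω (S \ {ω}) ≤ dist z ω := by
  by_contra h
  push_neg at h
  exact hD (mem_biUnion hω (mem_ball.mpr h))


lemma partI1 {b : ℝ} (hb : 0 < b) {d : ℕ} {lam : ℂ} (hD : lam ∉ unionBalls b d) :
    infDist lam (landauLevels b d) / 2 ≤ infDist lam (halfLine b d) ∧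
    infDist lam (halfLine b d) ≤ infDist lam (landauLevels b d) := by
  constructor
  · refine my_le_infDist (halfLine_nonempty b d) ?_
    intro p hp
    obtain ⟨him, hre⟩ := hp
    set x := p.re with hx
    have hpx : p = (x:ℂ) := by
      apply Complex.ext
      · simp [hx]
      · simp [him]
    obtain ⟨j, hj1, hj2⟩ := exists_bracket hb d hre
    have hrad := radius_ge hb d j
    have hball := dist_ge_of_not_mem_unionBalls hD j
    have h4b : 4 * b ≤ dist lam (landauLevel b d j) := by linarith
    have hdpj : dist p (landauLevel b d j) ≤ 2 * b := by
      rw [hpx, show landauLevel b d j = ((b * (d + 2*j) : ℝ) : ℂ) from rfl, dist_ofReal']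
      rw [abs_le]
      constructor <;> nlinarith
    have htri : dist lam (landauLevel b d j) ≤ dist lam p + dist p (landauLevel b d j) :=
      dist_triangle _ _ _
    have hE : infDist lam (landauLevels b d) ≤ dist lam (landauLevel b d j) :=
      infDist_le_dist_of_mem (lvl_mem b d j)
    linarith
  · exact infDist_le_infDist_of_subset (landau_subset_halfLine hb d) (landau_nonempty b d)


lemma partI2 {b mu : ℝ} (hb : 0 < b) (hmu : mu ≤ -1) {d : ℕ} {lam : ℂ}
    (hD : (lam - (mu:ℂ))⁻¹ ∉ unionBallsOf ((fun w : ℂ => (w - (mu:ℂ))⁻¹) '' landauLevels b d)) :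
    infDist ((lam - (mu:ℂ))⁻¹) ((fun w : ℂ => (w - (mu:ℂ))⁻¹) '' landauLevels b d) / 2 ≤
      infDist ((lam - (mu:ℂ))⁻¹) ((fun w : ℂ => (w - (mu:ℂ))⁻¹) '' halfLine b d) ∧
    infDist ((lam - (mu:ℂ))⁻¹) ((fun w : ℂ => (w - (mu:ℂ))⁻¹) '' halfLine b d) ≤
      infDist ((lam - (mu:ℂ))⁻¹) ((fun w : ℂ => (w - (mu:ℂ))⁻¹) '' landauLevels b d) := by
  set c : ℝ := -mu with hcdef
  have hc : 1 ≤ c := by rw [hcdef]; linarith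
  have hApos : ∀ k : ℕ, 0 < b * ((d:ℝ) + 2*k) + c := by
    intro k
    have h1 : (0:ℝ) ≤ (d:ℝ) + 2*k := by positivity
    nlinarith
  have hinv : ∀ x : ℝ, ((x:ℂ) - (mu:ℂ))⁻¹ = (((x + c)⁻¹ : ℝ) : ℂ) := by
    intro x
    rw [hcdef]
    push_cast
    ring_nf
  set Sr : ℕ → ℝ := fun k => (b * ((d:ℝ) + 2 * k) + c)⁻¹ with hSrdef
  have hφmem : ∀ k : ℕ, ((Sr k : ℝ) : ℂ) ∈
      (fun w : ℂ => (w - (mu:ℂ))⁻¹) '' landauLevels b d := by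
    intro k
    refine ⟨landauLevel b d k, lvl_mem b d k, ?_⟩
    show (((b * (d + 2*k) : ℝ):ℂ) - (mu:ℂ))⁻¹ = _
    rw [hinv]
  have hSanti : ∀ {i i' : ℕ}, i < i' → Sr i' < Sr i := by
    intro i i' hii
    have h : b * ((d:ℝ) + 2*i) + c < b * ((d:ℝ) + 2*i') + c := by
      have : (i:ℝ) < i' := by exact_mod_cast hii
      nlinarith
    exact inv_strictAnti₀ (hApos i) h
  constructor
  · refine my_le_infDist ((halfLine_nonempty b d).image _) ?_
    rintro q ⟨w, hwI, rfl⟩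
    obtain ⟨him, hre⟩ := hwI
    set x := w.re with hx
    have hwx : w = (x:ℂ) := by
      apply Complex.ext
      · simp [hx]
      · simp [him]
    have hxc : 0 < x + c := by nlinarith [hb.le, Nat.cast_nonneg (α := ℝ) d]
    have hq : (fun w : ℂ => (w - (mu:ℂ))⁻¹) w = (((x + c)⁻¹ : ℝ) : ℂ) := by
      rw [hwx]; exact hinv x
    rw [hq]
    obtain ⟨j, hj1, hj2⟩ := exists_bracket hb d hre
    have hq2 : (x+c)⁻¹ ≤ Sr j := by
      apply inv_anti₀ (hApos j)
      linarith
    have hq1 : Sr (j+1) ≤ (x+c)⁻¹ := by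
      have hcst : b * ((d:ℝ) + 2*((j+1:ℕ):ℝ)) + c = b * ((d:ℝ) + 2*((j:ℝ)+1)) + c := by
        push_cast; ring
      show (b * ((d:ℝ) + 2*((j+1:ℕ):ℝ)) + c)⁻¹ ≤ (x+c)⁻¹
      rw [hcst]
      apply inv_anti₀ hxc
      linarith
    have hg0 : Sr (j+1) ≤ Sr j := le_trans hq1 hq2
    have hrω : Sr j - Sr (j+1) ≤
        infDist ((Sr j : ℝ) : ℂ)
          (((fun w : ℂ => (w - (mu:ℂ))⁻¹) '' landauLevels b d) \ {((Sr j : ℝ) : ℂ)}) := by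
      have hnem : (((fun w : ℂ => (w - (mu:ℂ))⁻¹) '' landauLevels b d) \
          {((Sr j : ℝ) : ℂ)}).Nonempty := by
        refine ⟨((Sr (j+1) : ℝ) : ℂ), hφmem (j+1), ?_⟩
        simp only [mem_singleton_iff, Complex.ofReal_inj]
        exact ne_of_lt (hSanti (Nat.lt_succ_self j))
      refine my_le_infDist hnem ?_
      rintro y ⟨⟨w', ⟨k, rfl⟩, rfl⟩, hysing⟩
      have hyk : (fun w : ℂ => (w - (mu:ℂ))⁻¹) ((b * (d + 2*k) : ℝ) : ℂ)
          = ((Sr k : ℝ) : ℂ) := by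
        show (((b * (d + 2*k) : ℝ):ℂ) - (mu:ℂ))⁻¹ = _
        rw [hinv]
      rw [hyk] at hysing ⊢
      have hkj : k ≠ j := by
        rintro rfl
        exact hysing rfl
      rw [dist_ofReal']
      have := gap_le_abs hb hc (d := d) hkj.symm
      have hcst : b * ((d:ℝ) + 2*((j+1:ℕ):ℝ)) + c = b * ((d:ℝ) + 2*((j:ℝ)+1)) + c := by
        push_cast; ring
      show Sr j - Sr (j+1) ≤ |Sr j - Sr k|
      show (b * ((d:ℝ) + 2*j) + c)⁻¹ - (b * ((d:ℝ) + 2*((j+1:ℕ):ℝ)) + c)⁻¹ ≤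
        |(b * ((d:ℝ) + 2*j) + c)⁻¹ - (b * ((d:ℝ) + 2*k) + c)⁻¹|
      rw [hcst]
      exact this
    have hball := dist_ge_of_not_mem_unionBallsOf hD (hφmem j)
    have hEd : infDist ((lam - (mu:ℂ))⁻¹) ((fun w : ℂ => (w - (mu:ℂ))⁻¹) '' landauLevels b d)
        ≤ dist ((lam - (mu:ℂ))⁻¹) ((Sr j : ℝ) : ℂ) := infDist_le_dist_of_mem (hφmem j)
    have htri : dist ((lam - (mu:ℂ))⁻¹) ((Sr j : ℝ) : ℂ) ≤
        dist ((lam - (mu:ℂ))⁻¹) (((x + c)⁻¹ : ℝ) : ℂ) +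
        dist ((((x + c)⁻¹ : ℝ)) : ℂ) ((Sr j : ℝ) : ℂ) := dist_triangle _ _ _
    have hdq : dist ((((x + c)⁻¹ : ℝ)) : ℂ) ((Sr j : ℝ) : ℂ) ≤ Sr j - Sr (j+1) := by
      rw [dist_ofReal', abs_le]
      constructor <;> linarith
    linarith
  · exact infDist_le_infDist_of_subset
      (image_mono (landau_subset_halfLine hb d)) ((landau_nonempty b d).image _)


lemma partII {b mu : ℝ} (hb : 0 < b) (hmu : mu ≤ -1) {d : ℕ} {lam : ℂ}
    (hA : lam ∈ unionBalls b d) (hne : lam ≠ (mu:ℂ)) :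
    1/(2+16*b) * infDist lam (landauLevels b d) / ((-mu) ^ 2 * (1 + ‖lam‖) ^ 2) ≤
      infDist ((lam - (mu:ℂ))⁻¹) ((fun w : ℂ => (w - (mu:ℂ))⁻¹) '' landauLevels b d) := by
  set c : ℝ := -mu with hcdef
  have hc : 1 ≤ c := by rw [hcdef]; linarith
  set dE := infDist lam (landauLevels b d) with hdEdef
  have hdE0 : 0 ≤ dE := infDist_nonneg
  obtain ⟨j, hj⟩ : ∃ j, lam ∈ ball (landauLevel b d j)
      (2 * infDist (landauLevel b d j) (landauLevels b d \ {landauLevel b d j})) := by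
    simpa [unionBalls, mem_iUnion] using hA
  have hdE4 : dE ≤ 4 * b := by
    have h1 : dE ≤ dist lam (landauLevel b d j) := infDist_le_dist_of_mem (lvl_mem b d j)
    have h2 := mem_ball.mp hj
    have h3 := radius_le hb d j
    linarith
  set L := ‖lam‖ with hLdef
  have hL0 : 0 ≤ L := norm_nonneg lam
  set Y := c * (1 + L) with hYdef
  have hY1 : 1 ≤ Y := by nlinarith
  have hY0 : 0 ≤ Y := by linarith
  set P := ‖lam - (mu:ℂ)‖ with hPdef
  have hlamne : lam - (mu:ℂ) ≠ 0 := sub_ne_zero.mpr hne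
  have hP0 : 0 < P := norm_pos_iff.mpr hlamne
  have hLc : L + c ≤ Y := by nlinarith
  have hPle : P ≤ Y := by
    have h1 : P ≤ L + c := by
      rw [hPdef, hLdef]
      calc ‖lam - (mu:ℂ)‖ ≤ ‖lam‖ + ‖((mu:ℝ):ℂ)‖ := by
            simpa [sub_eq_add_neg] using norm_add_le lam (-((mu:ℝ):ℂ))
        _ = ‖lam‖ + c := by
            rw [Complex.norm_real, Real.norm_eq_abs, abs_of_nonpos (by linarith), hcdef]
    linarith
  have hb16 : (0:ℝ) < 2+16*b := by linarith
  have hCb : (0:ℝ) < 1/(2+16*b) := div_pos one_pos hb16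
  clear_value dE L Y P
  refine my_le_infDist ((landau_nonempty b d).image _) ?_
  rintro y ⟨w, ⟨k, rfl⟩, rfl⟩
  set Ak := b * ((d:ℝ) + 2*k) + c with hAkdef
  have hAk0 : 0 < Ak := by
    have h1 : (0:ℝ) ≤ (d:ℝ) + 2*k := by positivity
    rw [hAkdef]; nlinarith
  have hsub : ((b * (d + 2*k) : ℝ):ℂ) - (mu:ℂ) = ((Ak : ℝ) : ℂ) := by
    rw [hAkdef, hcdef]; push_cast; ring
  have hwne : ((b * (d + 2*k) : ℝ):ℂ) - (mu:ℂ) ≠ 0 := by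
    rw [hsub]
    exact Complex.ofReal_ne_zero.mpr (ne_of_gt hAk0)
  set T := ‖lam - ((b * (d + 2*k) : ℝ):ℂ)‖ with hTdef
  have hTd : dE ≤ T := by
    have h1 : infDist lam (landauLevels b d) ≤ dist lam (landauLevel b d k) :=
      infDist_le_dist_of_mem (lvl_mem b d k)
    rw [show landauLevel b d k = ((b * (d + 2*k) : ℝ) : ℂ) from rfl, Complex.dist_eq] at h1
    rw [hdEdef, hTdef]
    exact h1
  have hdist : dist ((lam - (mu:ℂ))⁻¹) ((fun w : ℂ => (w - (mu:ℂ))⁻¹) ((b * (d + 2*k) : ℝ):ℂ))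
      = T / (P * Ak) := by
    show dist ((lam - (mu:ℂ))⁻¹) ((((b * (d + 2*k) : ℝ):ℂ) - (mu:ℂ))⁻¹) = _
    rw [Complex.dist_eq]
    have hid : (lam - (mu:ℂ))⁻¹ - (((b * (d + 2*k) : ℝ):ℂ) - (mu:ℂ))⁻¹
        = (((b * (d + 2*k) : ℝ):ℂ) - lam) *
          ((lam - (mu:ℂ))⁻¹ * ((((b * (d + 2*k) : ℝ):ℂ) - (mu:ℂ)))⁻¹) := by
      rw [inv_sub_inv hlamne hwne, div_eq_mul_inv, mul_inv]
      ring
    rw [hid, norm_mul, norm_mul, norm_inv, norm_inv]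
    rw [show ‖(((b * (d + 2*k) : ℝ)):ℂ) - lam‖ = T by
      rw [hTdef]; exact (norm_sub_rev _ _)]
    rw [hsub, Complex.norm_real, Real.norm_eq_abs, abs_of_pos hAk0, ← hPdef]
    rw [div_eq_mul_inv, mul_inv]
  clear_value Ak T
  rw [hdist]
  rw [div_le_div_iff₀ (mul_pos (pow_pos (by linarith : (0:ℝ) < c) 2)
    (pow_pos (by linarith : (0:ℝ) < 1 + L) 2)) (mul_pos hP0 hAk0)]
  rcases le_or_gt (b * ((d:ℝ) + 2*k)) (L + 8*b) with hcase | hcase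
  · have h8 : 8*b ≤ 8*b*Y := by nlinarith
    have hbY : 0 ≤ b*Y := by positivity
    have hAkle : Ak ≤ (2+16*b)*Y := by
      have hstep : Ak ≤ 2*Y + 16*(b*Y) := by
        rw [hAkdef]
        linarith
      calc Ak ≤ 2*Y + 16*(b*Y) := hstep
        _ = (2+16*b)*Y := by ring
    calc 1/(2+16*b) * dE * (P * Ak) ≤ 1/(2+16*b) * dE * (Y * ((2+16*b)*Y)) := by
          apply mul_le_mul_of_nonneg_left _ (mul_nonneg hCb.le hdE0)
          exact mul_le_mul hPle hAkle hAk0.le hY0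
      _ = dE * (Y*Y) := by field_simp
      _ ≤ T * (Y*Y) := mul_le_mul_of_nonneg_right hTd (mul_nonneg hY0 hY0)
      _ = T * ((-mu)^2 * (1 + L)^2) := by rw [hYdef, hcdef]; ring
  · set X := b * ((d:ℝ) + 2*k) - L with hXdef
    have hX8 : 8*b < X := by rw [hXdef]; linarith
    have hX0 : 0 < X := by linarith
    clear_value X
    have hTX : X ≤ T := by
      have h := norm_sub_norm_le (((b * (d + 2*k) : ℝ)):ℂ) lam
      rw [Complex.norm_real, Real.norm_eq_abs,
        abs_of_nonneg (by nlinarith [Nat.cast_nonneg (α := ℝ) d, Nat.cast_nonneg (α := ℝ) k] :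
          (0:ℝ) ≤ b * ((d:ℝ) + 2*k))] at h
      rw [hTdef, hXdef, hLdef]
      calc b * ((d:ℝ) + 2*k) - ‖lam‖ ≤ ‖((b * (d + 2*k) : ℝ):ℂ) - lam‖ := h
        _ = ‖lam - ((b * (d + 2*k) : ℝ):ℂ)‖ := norm_sub_rev _ _
    have hmid : 1/(2+16*b) * (4*b) * Ak ≤ X * Y := by
      rw [div_mul_eq_mul_div, div_mul_eq_mul_div, div_le_iff₀ (by linarith : (0:ℝ) < 2+16*b)]
      have t1 : 0 ≤ 4*b*X*(Y-1) :=
        mul_nonneg (mul_nonneg (by linarith) (by linarith)) (by linarith)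
      have t2 : 0 ≤ 4*b*(Y-(L+c)) := mul_nonneg (by linarith) (by linarith)
      have t3 : 0 ≤ (X-8*b)*Y := mul_nonneg (by linarith) hY0
      have h4 : 0 ≤ X*Y := mul_nonneg (by linarith) hY0
      have h5 : 0 ≤ b*(X*Y) := mul_nonneg hb.le h4
      have hAkX : Ak = X + (L + c) := by rw [hAkdef, hXdef]; ring
      rw [hAkX]
      linarith [t1, t2, t3, h4, h5]
    calc 1/(2+16*b) * dE * (P * Ak) ≤ 1/(2+16*b) * (4*b) * (Y * Ak) := by
          apply mul_le_mul
          · exact mul_le_mul_of_nonneg_left hdE4 hCb.le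
          · exact mul_le_mul_of_nonneg_right hPle hAk0.le
          · exact mul_nonneg hP0.le hAk0.le
          · exact mul_nonneg hCb.le (by linarith)
      _ = (1/(2+16*b) * (4*b) * Ak) * Y := by ring
      _ ≤ (X*Y)*Y := mul_le_mul_of_nonneg_right hmid hY0
      _ = X*(Y*Y) := by ring
      _ ≤ T*(Y*Y) := mul_le_mul_of_nonneg_right hTX (mul_nonneg hY0 hY0)
      _ = T * ((-mu)^2 * (1 + L)^2) := by rw [hYdef, hcdef]; ring

/-- **Lemma 6.4.**  Let `μ = -‖V‖_∞ - 1`, `φ_μ(λ) = (λ-μ)⁻¹`, `I = [Λ₀,∞)`,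
`E = {Λ_j}_j ⊆ I`, `r_j = dist(Λ_j, E \ {Λ_j}) (= 2b)`, `A = ∪_j B(Λ_j, 2r_j)`,
`D = ℂ \ A`, and analogously `𝒜 = ∪_{ω ∈ φ_μ(E)} B(ω, 2r_ω)`, `𝒟 = ℂ \ 𝒜`.  Then:
(i) for `λ ∈ D`, `dist(λ,E)/2 ≤ dist(λ,I) ≤ dist(λ,E)`, and for `φ_μ(λ) ∈ 𝒟`,
`dist(φ_μ(λ),φ_μ(E))/2 ≤ dist(φ_μ(λ),φ_μ(I)) ≤ dist(φ_μ(λ),φ_μ(E))`;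
(ii) there is `C = C(b,d)` such that for every `λ ∈ A`,
`dist(φ_μ(λ), φ_μ(E)) ≥ C dist(λ,E) / ((1+‖V‖_∞)² (1+|λ|)²)`. -/
theorem near_and_far_from_landau_levels
    (b : ℝ) (hb : 0 < b) (d : ℕ) (hd : 1 ≤ d) :
    ∃ Cc : ℝ, 0 < Cc ∧
      ∀ (V : EuclideanSpace ℝ (Fin (2 * d)) → ℂ), MemLp V ⊤ volume →
      ∀ lam : ℂ,
        (lam ∉ unionBalls b d →
          infDist lam (landauLevels b d) / 2 ≤ infDist lam (halfLine b d) ∧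
          infDist lam (halfLine b d) ≤ infDist lam (landauLevels b d)) ∧
        (lam ≠ ((-(supNorm V) - 1 : ℝ) : ℂ) →
          (lam - ((-(supNorm V) - 1 : ℝ) : ℂ))⁻¹ ∉
            unionBallsOf ((fun w : ℂ => (w - ((-(supNorm V) - 1 : ℝ) : ℂ))⁻¹) ''
              landauLevels b d) →
          infDist ((lam - ((-(supNorm V) - 1 : ℝ) : ℂ))⁻¹)
              ((fun w : ℂ => (w - ((-(supNorm V) - 1 : ℝ) : ℂ))⁻¹) '' landauLevels b d) / 2 ≤
            infDist ((lam - ((-(supNorm V) - 1 : ℝ) : ℂ))⁻¹)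
              ((fun w : ℂ => (w - ((-(supNorm V) - 1 : ℝ) : ℂ))⁻¹) '' halfLine b d) ∧
          infDist ((lam - ((-(supNorm V) - 1 : ℝ) : ℂ))⁻¹)
              ((fun w : ℂ => (w - ((-(supNorm V) - 1 : ℝ) : ℂ))⁻¹) '' halfLine b d) ≤
            infDist ((lam - ((-(supNorm V) - 1 : ℝ) : ℂ))⁻¹)
              ((fun w : ℂ => (w - ((-(supNorm V) - 1 : ℝ) : ℂ))⁻¹) '' landauLevels b d)) ∧
        (lam ∈ unionBalls b d → lam ≠ ((-(supNorm V) - 1 : ℝ) : ℂ) →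
          Cc * infDist lam (landauLevels b d) /
              ((1 + supNorm V) ^ 2 * (1 + ‖lam‖) ^ 2) ≤
            infDist ((lam - ((-(supNorm V) - 1 : ℝ) : ℂ))⁻¹)
              ((fun w : ℂ => (w - ((-(supNorm V) - 1 : ℝ) : ℂ))⁻¹) '' landauLevels b d)) := by
  refine ⟨1/(2+16*b), div_pos one_pos (by linarith), ?_⟩
  intro V hV lam
  set mu : ℝ := -(supNorm V) - 1 with hmudef
  have hm0 : 0 ≤ supNorm V := ENNReal.toReal_nonneg
  have hmu1 : mu ≤ -1 := by rw [hmudef]; linarith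
  refine ⟨fun hD => partI1 hb hD, fun _ hD => partI2 hb hmu1 hD, fun hA hne => ?_⟩
  have h := partII hb hmu1 hA hne
  have hrw : (1 + supNorm V) = -mu := by rw [hmudef]; ring
  rw [hrw]
  exact h

end
end
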